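/- arXiv:1903.00928 — 7 statements merged into one kernel-verified Lean document; each statement's English description precedes it below -/
import Mathlib

section
/- For the hierarchy γ | p, ω ~ Gamma(p, ω) (rate parametrization), ω | p ~ Gamma(1−p, 1), p ~ Uniform(0,1), the marginal density of γ is 1/(γ((log γ)² + π²)) for γ > 0. Equivalently, ∫₀¹ ∫₀^∞ [ω^p γ^{p−1} e^{−ωγ}/Γ(p)] · [ω^{−p} e^{−ω}/Γ(1−p)] dω dp = 1/(γ((log γ)² + π²)). -/
open Real MeasureTheory

private lemma hths_exp_int (b : ℝ) (hb : 0 < b) :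
    ∫ x in Set.Ioi (0:ℝ), Real.exp (-(b * x)) = 1 / b := by
  have h := integral_exp_neg_mul_rpow (p := 1) (b := b) one_pos hb
  simp only [rpow_one] at h
  rw [show (fun x : ℝ => Real.exp (-(b * x))) = fun x => Real.exp (-b * x) from
    funext fun x => by ring_nf]
  rw [h, show (1:ℝ)/1 + 1 = 2 by norm_num, Real.Gamma_two,
    show (-1 : ℝ)/1 = -1 by norm_num, rpow_neg_one]
  simp [one_div]

private lemma hths_inner (γ : ℝ) (hγ : 0 < γ) (p : ℝ) (hp : p ∈ Set.Ioo (0:ℝ) 1) :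
    ∫ ω in Set.Ioi (0:ℝ),
        (ω ^ p * γ ^ (p - 1) * Real.exp (-(ω * γ)) / Real.Gamma p) *
        (ω ^ (-p) * Real.exp (-ω) / Real.Gamma (1 - p))
    = γ ^ (p - 1) * Real.sin (π * p) / (π * (1 + γ)) := by
  have key : ∀ ω ∈ Set.Ioi (0:ℝ),
      (ω ^ p * γ ^ (p - 1) * Real.exp (-(ω * γ)) / Real.Gamma p) *
        (ω ^ (-p) * Real.exp (-ω) / Real.Gamma (1 - p))
      = (γ ^ (p - 1) / (Real.Gamma p * Real.Gamma (1 - p))) * Real.exp (-((1 + γ) * ω)) := by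
    intro ω hω
    have h1 : ω ^ p * ω ^ (-p) = 1 := by rw [← rpow_add hω]; simp
    have h2 : Real.exp (-(ω * γ)) * Real.exp (-ω) = Real.exp (-((1 + γ) * ω)) := by
      rw [← Real.exp_add]; ring_nf
    calc _ = (ω ^ p * ω ^ (-p)) * (γ ^ (p - 1) * (Real.exp (-(ω * γ)) * Real.exp (-ω)))
            / (Real.Gamma p * Real.Gamma (1 - p)) := by
          rw [div_mul_div_comm]; ring_nf
      _ = _ := by rw [h1, h2]; ring
  rw [setIntegral_congr_fun measurableSet_Ioi key, MeasureTheory.integral_const_mul,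
    hths_exp_int (1 + γ) (by linarith), Real.Gamma_mul_Gamma_one_sub]
  have hs : Real.sin (π * p) > 0 := by
    apply Real.sin_pos_of_pos_of_lt_pi
    · exact mul_pos Real.pi_pos hp.1
    · calc π * p < π * 1 := by nlinarith [Real.pi_pos, hp.2]
        _ = π := mul_one π
  have hπ : (π : ℝ) ≠ 0 := Real.pi_ne_zero
  field_simp

private lemma hths_outer (L : ℝ) :
    ∫ p in (0:ℝ)..1, Real.exp (L * (p - 1)) * Real.sin (π * p)
      = π * (1 + Real.exp (-L)) / (L^2 + π^2) := by
  have hD : L^2 + π^2 ≠ 0 := by positivity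
  set F : ℝ → ℝ := fun p =>
    Real.exp (L * (p - 1)) * (L * Real.sin (π * p) - π * Real.cos (π * p)) / (L^2 + π^2) with hF
  have hderiv : ∀ p ∈ Set.uIcc (0:ℝ) 1,
      HasDerivAt F (Real.exp (L * (p - 1)) * Real.sin (π * p)) p := by
    intro p _
    have h1 : HasDerivAt (fun p => Real.exp (L * (p - 1))) (L * Real.exp (L * (p - 1))) p := by
      have : HasDerivAt (fun p : ℝ => L * (p - 1)) L p := by
        simpa using ((hasDerivAt_id p).sub_const 1).const_mul L
      simpa [mul_comm] using this.exp
    have h2 : HasDerivAt (fun p => L * Real.sin (π * p) - π * Real.cos (π * p))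
        (L * (π * Real.cos (π * p)) + π * (π * Real.sin (π * p))) p := by
      have hπp : HasDerivAt (fun p : ℝ => π * p) π p := by
        simpa using (hasDerivAt_id p).const_mul π
      have hs : HasDerivAt (fun p => Real.sin (π * p)) (Real.cos (π * p) * π) p := hπp.sin
      have hc : HasDerivAt (fun p => Real.cos (π * p)) (-Real.sin (π * p) * π) p := hπp.cos
      have := (hs.const_mul L).sub (hc.const_mul π)
      exact this.congr_deriv (by ring)
    have := ((h1.mul h2).div_const (L^2 + π^2))
    refine this.congr_deriv ?_
    field_simp
    ring
  have hcont : ContinuousOn (fun p => Real.exp (L * (p - 1)) * Real.sin (π * p))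
      (Set.uIcc (0:ℝ) 1) :=
    (Continuous.mul (by continuity) (by continuity)).continuousOn
  rw [intervalIntegral.integral_eq_sub_of_hasDerivAt hderiv (hcont.intervalIntegrable)]
  simp only [hF]
  rw [show π * 1 = π by ring]
  simp [Real.sin_pi, Real.cos_pi]
  field_simp
  ring

/-- Integrating out ω ~ Gamma(1-p,1) and p ~ Uniform(0,1) from the conditional
Gamma(p, ω) (shape-rate) density of γ yields the log-Cauchy HTHS marginal density. -/
theorem hths_hierarchy_marginal (γ : ℝ) (hγ : 0 < γ) :
    ∫ p in Set.Ioo (0:ℝ) 1, ∫ ω in Set.Ioi (0:ℝ),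
        (ω ^ p * γ ^ (p - 1) * Real.exp (-(ω * γ)) / Real.Gamma p) *
        (ω ^ (-p) * Real.exp (-ω) / Real.Gamma (1 - p))
      = 1 / (γ * ((Real.log γ)^2 + π^2)) := by
  set L := Real.log γ with hL
  rw [setIntegral_congr_fun measurableSet_Ioo (fun p hp => hths_inner γ hγ p hp)]
  have hrw : ∀ p ∈ Set.Ioo (0:ℝ) 1,
      γ ^ (p - 1) * Real.sin (π * p) / (π * (1 + γ))
      = (1 / (π * (1 + γ))) * (Real.exp (L * (p - 1)) * Real.sin (π * p)) := by
    intro p hp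
    rw [Real.rpow_def_of_pos hγ]
    ring
  rw [setIntegral_congr_fun measurableSet_Ioo hrw, MeasureTheory.integral_const_mul,
    ← MeasureTheory.integral_Ioc_eq_integral_Ioo,
    ← intervalIntegral.integral_of_le (by norm_num : (0:ℝ) ≤ 1),
    hths_outer L]
  have hexp : Real.exp (-L) = 1 / γ := by
    rw [hL, ← Real.log_inv, Real.exp_log (by positivity), one_div]
  rw [hexp]
  have hπ : (π : ℝ) ≠ 0 := Real.pi_ne_zero
  have hD : L^2 + π^2 ≠ 0 := by positivity
  have h1γ : (1 + γ) ≠ 0 := by linarith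
  field_simp
  exact add_comm γ 1
end

section
/- The function g(τ) = 1/(τ(1−τ)([log τ − log(1−τ)]² + π²)) is a probability density on (0,1). -/
open Real MeasureTheory

private lemma one_add_exp_pos (u : ℝ) : 0 < 1 + Real.exp u := by positivity

private lemma logistic_image :
    (fun u : ℝ => Real.exp u / (1 + Real.exp u)) '' Set.univ = Set.Ioo (0:ℝ) 1 := by
  ext t
  simp only [Set.image_univ, Set.mem_range, Set.mem_Ioo]
  constructor
  · rintro ⟨u, rfl⟩
    have h := one_add_exp_pos u
    have he := Real.exp_pos u
    constructor
    · positivity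
    · rw [div_lt_one h]; linarith
  · rintro ⟨h0, h1⟩
    have h1t : (0:ℝ) < 1 - t := by linarith
    refine ⟨Real.log (t / (1 - t)), ?_⟩
    rw [Real.exp_log (by positivity : (0:ℝ) < t / (1 - t))]
    have hs : 1 + t / (1 - t) = 1 / (1 - t) := by field_simp; ring
    rw [hs]
    field_simp

private lemma integral_inv_sq_add_pi_sq :
    ∫ u : ℝ, (u ^ 2 + π ^ 2)⁻¹ = 1 := by
  have hπ : (0:ℝ) < π := Real.pi_pos
  have key : ∀ u : ℝ, (u ^ 2 + π ^ 2)⁻¹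
      = (π ^ 2)⁻¹ * (1 + (π⁻¹ * u) ^ 2)⁻¹ := by
    intro u
    rw [mul_pow, ← mul_inv]
    congr 1
    field_simp
    ring
  simp_rw [key]
  rw [MeasureTheory.integral_const_mul]
  have := MeasureTheory.Measure.integral_comp_mul_left (fun x : ℝ => (1 + x ^ 2)⁻¹) π⁻¹
  rw [this, integral_univ_inv_one_add_sq, inv_inv, abs_of_pos hπ, smul_eq_mul]
  field_simp

/-- The HTHS marginal density of the shrinkage profile τ integrates to 1 on (0,1). -/
theorem hths_tau_density_integrates_to_one :
    ∫ τ in Set.Ioo (0:ℝ) 1,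
        1 / (τ * (1 - τ) * ((Real.log τ - Real.log (1 - τ))^2 + π^2)) = 1 := by
  set f : ℝ → ℝ := fun u => Real.exp u / (1 + Real.exp u) with hf
  set f' : ℝ → ℝ := fun u => Real.exp u / (1 + Real.exp u) ^ 2 with hf'
  have hderiv : ∀ u ∈ (Set.univ : Set ℝ),
      HasDerivWithinAt f (f' u) Set.univ u := by
    intro u _
    have h := one_add_exp_pos u
    have : HasDerivAt f (Real.exp u / (1 + Real.exp u) ^ 2) u := by
      have h1 : HasDerivAt (fun u : ℝ => Real.exp u) (Real.exp u) u := Real.hasDerivAt_exp u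
      have h2 : HasDerivAt (fun u : ℝ => 1 + Real.exp u) (Real.exp u) u :=
        (Real.hasDerivAt_exp u).const_add 1
      have := h1.div h2 h.ne'
      refine this.congr_deriv ?_
      ring
    exact this.hasDerivWithinAt
  have hinj : Set.InjOn f Set.univ := by
    intro a _ b _ hab
    have ha := one_add_exp_pos a
    have hb := one_add_exp_pos b
    have : Real.exp a = Real.exp b := by
      have := hab
      simp only [hf, div_eq_div_iff ha.ne' hb.ne'] at this
      nlinarith [Real.exp_pos a, Real.exp_pos b]
    exact Real.exp_injective this
  have himg := logistic_image
  calc ∫ τ in Set.Ioo (0:ℝ) 1,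
        1 / (τ * (1 - τ) * ((Real.log τ - Real.log (1 - τ))^2 + π^2))
      = ∫ u in Set.univ, |f' u| •
          (1 / (f u * (1 - f u) * ((Real.log (f u) - Real.log (1 - f u))^2 + π^2))) := by
        rw [← himg]
        exact MeasureTheory.integral_image_eq_integral_abs_deriv_smul
          MeasurableSet.univ hderiv hinj _
    _ = ∫ u : ℝ, (u ^ 2 + π ^ 2)⁻¹ := by
        rw [MeasureTheory.setIntegral_univ]
        congr 1
        ext u
        have h := one_add_exp_pos u
        have he := Real.exp_pos u
        have h1f : 1 - f u = 1 / (1 + Real.exp u) := by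
          simp only [hf]; field_simp; ring
        have hlog : Real.log (f u) - Real.log (1 - f u) = u := by
          rw [h1f]
          simp only [hf]
          rw [Real.log_div he.ne' h.ne', Real.log_exp, one_div, Real.log_inv]
          ring
        rw [hlog, h1f]
        have hfpos : 0 < f' u := by simp only [hf']; positivity
        rw [abs_of_pos hfpos, smul_eq_mul]
        simp only [hf, hf']
        have hd : (0:ℝ) < u ^ 2 + π ^ 2 := by positivity
        field_simp
    _ = 1 := integral_inv_sq_add_pi_sq
end

section
/- Let κ(φ) = ∫₀^∞ (1/(ω + φ²/2)) e^{−ω} dω. Then φ² κ(φ) → 2 as |φ| → ∞; equivalently κ(φ) is asymptotically 2/φ². -/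
open Real MeasureTheory Filter

/-- Up to a constant, the Horseshoe marginal prior density of φ. -/
noncomputable def hsPhiKernel (φ : ℝ) : ℝ :=
  ∫ ω in Set.Ioi (0:ℝ), (1 / (ω + φ^2 / 2)) * Real.exp (-ω)

lemma hs_g_tendsto :
    Tendsto (fun t : ℝ => ∫ ω in Set.Ioi (0:ℝ), (t / (ω + t / 2)) * Real.exp (-ω))
      atTop (nhds 2) := by
  have hint : IntegrableOn (fun ω : ℝ => 2 * Real.exp (-ω)) (Set.Ioi 0) := by
    have h := (exp_neg_integrableOn_Ioi 0 one_pos).const_mul 2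
    simpa [IntegrableOn] using h
  have h := MeasureTheory.tendsto_integral_filter_of_dominated_convergence
    (μ := volume.restrict (Set.Ioi (0:ℝ))) (F := fun (t : ℝ) ω => (t / (ω + t / 2)) * Real.exp (-ω))
    (fun ω => 2 * Real.exp (-ω))
    (by
      filter_upwards with t
      exact ((measurable_const.div (measurable_id.add_const _)).mul
        (Real.measurable_exp.comp measurable_neg)).aestronglyMeasurable)
    (by
      filter_upwards [eventually_ge_atTop (1:ℝ)] with t ht
      filter_upwards [ae_restrict_mem measurableSet_Ioi] with ω hω
      have hω0 : 0 < ω := hω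
      have hden : 0 < ω + t / 2 := by linarith
      have h1 : t / (ω + t / 2) ≤ 2 := by
        rw [div_le_iff₀ hden]; linarith
      have h0 : 0 ≤ t / (ω + t / 2) := div_nonneg (by linarith) hden.le
      rw [Real.norm_eq_abs, abs_mul, abs_of_nonneg h0, abs_of_nonneg (Real.exp_pos _).le]
      exact mul_le_mul_of_nonneg_right h1 (Real.exp_pos _).le)
    hint
    (by
      filter_upwards [ae_restrict_mem measurableSet_Ioi] with ω hω
      have hω0 : 0 < ω := hω
      have hmain : Tendsto (fun t : ℝ => t / (ω + t / 2)) atTop (nhds 2) := by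
        have heq : (fun t : ℝ => t / (ω + t / 2)) =ᶠ[atTop]
            (fun t => 1 / (ω * t⁻¹ + 1/2)) := by
          filter_upwards [eventually_gt_atTop (0:ℝ)] with t ht
          have hden : 0 < ω + t / 2 := by linarith
          rw [div_eq_div_iff hden.ne' (by positivity)]
          field_simp
        rw [tendsto_congr' heq]
        have hd : Tendsto (fun t : ℝ => ω * t⁻¹ + 1/2) atTop (nhds (1/2)) := by
          have := (tendsto_inv_atTop_zero.const_mul ω).add_const (1/2 : ℝ)
          simpa using this
        have := hd.inv₀ (by norm_num)
        simpa [one_div] using this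
      simpa using hmain.mul_const (Real.exp (-ω)))
  have h2 : (∫ ω in Set.Ioi (0:ℝ), 2 * Real.exp (-ω)) = 2 := by
    rw [MeasureTheory.integral_const_mul, integral_exp_neg_Ioi_zero]; ring
  rwa [h2] at h

/-- The Horseshoe marginal of φ has quadratic tails: φ² κ(φ) → 2 as |φ| → ∞. -/
theorem hs_phi_tail :
    Filter.Tendsto (fun φ : ℝ => φ^2 * hsPhiKernel φ) (Filter.cocompact ℝ) (nhds 2) := by
  have key : ∀ φ : ℝ, φ^2 * hsPhiKernel φ =
      ∫ ω in Set.Ioi (0:ℝ), (φ^2 / (ω + φ^2 / 2)) * Real.exp (-ω) := by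
    intro φ
    rw [hsPhiKernel, ← MeasureTheory.integral_const_mul]
    congr 1; ext ω; ring
  simp only [key]
  have hsq : Tendsto (fun φ : ℝ => φ^2) (cocompact ℝ) atTop := by
    have h1 : Tendsto (fun φ : ℝ => ‖φ‖^2) (cocompact ℝ) atTop :=
      (tendsto_pow_atTop two_ne_zero).comp tendsto_norm_cocompact_atTop
    simpa [Real.norm_eq_abs, sq_abs] using h1
  exact hs_g_tendsto.comp hsq
end

section
/- The HTHS prior marginal on φ has heavier tails than the Horseshoe prior marginal: with κ(φ) = ∫₀^∞ e^{−ω}/(ω + φ²/2) dω and h(φ) as the HTHS integral ∫₀^∞ [(φ²/2 + ω + 1)/(((log(φ²/2 + ω))² + π²)(φ²/2 + ω)^{3/2})] e^{−ω} dω, the ratio κ(φ)/h(φ) → 0 as |φ| → ∞. -/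
open Real MeasureTheory Filter

/-- Up to a constant, the HTHS marginal prior density of φ. -/
noncomputable def hthsPhiKernel (φ : ℝ) : ℝ :=
  ∫ ω in Set.Ioi (0:ℝ),
    ((φ^2 / 2 + ω + 1) / (((Real.log (φ^2 / 2 + ω))^2 + π^2) * (φ^2 / 2 + ω) ^ ((3:ℝ)/2)))
      * Real.exp (-ω)

lemma hs_nonneg (φ : ℝ) : 0 ≤ hsPhiKernel φ := by
  apply setIntegral_nonneg measurableSet_Ioi
  intro ω hω
  have hω' : (0:ℝ) < ω := hω
  have : (0:ℝ) < ω + φ^2/2 := by positivity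
  positivity

lemma hths_nonneg (φ : ℝ) : 0 ≤ hthsPhiKernel φ := by
  apply setIntegral_nonneg measurableSet_Ioi
  intro ω hω
  have hω' : (0:ℝ) < ω := hω
  have h1 : (0:ℝ) ≤ φ^2/2 + ω := by positivity
  have h2 : (0:ℝ) ≤ (φ^2/2 + ω) ^ ((3:ℝ)/2) := Real.rpow_nonneg h1 _
  positivity

lemma exp_neg_int : IntegrableOn (fun ω : ℝ => Real.exp (-ω)) (Set.Ioi (0:ℝ)) := by
  have := exp_neg_integrableOn_Ioi (0:ℝ) (one_pos)
  simpa using this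

lemma hs_le (φ : ℝ) (ht : 2 ≤ φ^2/2) : hsPhiKernel φ ≤ 1/(φ^2/2) := by
  set t := φ^2/2 with htdef
  have ht0 : (0:ℝ) < t := lt_of_lt_of_le two_pos ht
  have key : hsPhiKernel φ ≤ ∫ ω in Set.Ioi (0:ℝ), (1/t) * Real.exp (-ω) := by
    apply integral_mono_of_nonneg
    · filter_upwards [ae_restrict_mem measurableSet_Ioi] with ω hω
      have hω' : (0:ℝ) < ω := hω
      positivity
    · exact exp_neg_int.const_mul _
    · filter_upwards [ae_restrict_mem measurableSet_Ioi] with ω hω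
      have hω' : (0:ℝ) < ω := hω
      have : (1:ℝ)/(ω + t) ≤ 1/t := by
        apply one_div_le_one_div_of_le ht0; linarith
      exact mul_le_mul_of_nonneg_right this (Real.exp_nonneg _)
  calc hsPhiKernel φ ≤ ∫ ω in Set.Ioi (0:ℝ), (1/t) * Real.exp (-ω) := key
    _ = 1/t := by
        rw [integral_const_mul, integral_exp_neg_Ioi_zero, mul_one]


lemma hths_integrable (φ : ℝ) (ht : 2 ≤ φ^2/2) :
    IntegrableOn (fun ω : ℝ =>
      ((φ^2 / 2 + ω + 1) / (((Real.log (φ^2 / 2 + ω))^2 + π^2) * (φ^2 / 2 + ω) ^ ((3:ℝ)/2)))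
      * Real.exp (-ω)) (Set.Ioi (0:ℝ)) := by
  set t := φ^2/2 with htdef
  apply Integrable.mono' exp_neg_int
  · apply Measurable.aestronglyMeasurable
    have hm : Measurable fun ω : ℝ => t + ω := measurable_const.add measurable_id
    have hrpm : Measurable fun ω : ℝ => (t + ω) ^ ((3:ℝ)/2) :=
      (Real.continuous_rpow_const (by norm_num)).measurable.comp hm
    exact ((hm.add measurable_const).div
      ((((hm.log).pow_const 2).add measurable_const).mul hrpm)).mul
      (measurable_id.neg.exp)
  · filter_upwards [ae_restrict_mem measurableSet_Ioi] with ω hω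
    have hω' : (0:ℝ) < ω := hω
    have hpos : (0:ℝ) < t + ω := by linarith
    have h1 : (1:ℝ) ≤ t + ω := by linarith
    have hA : t + ω + 1 ≤ 2 * (t + ω) := by linarith
    have hrp : t + ω ≤ (t + ω) ^ ((3:ℝ)/2) := by
      nth_rewrite 1 [← Real.rpow_one (t + ω)]
      exact Real.rpow_le_rpow_of_exponent_le h1 (by norm_num)
    have hpi : (2:ℝ) ≤ π^2 := by nlinarith [Real.pi_gt_three]
    have hB : π^2 * (t + ω) ≤ ((Real.log (t + ω))^2 + π^2) * (t + ω) ^ ((3:ℝ)/2) := by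
      apply mul_le_mul (by nlinarith [sq_nonneg (Real.log (t+ω))]) hrp (le_of_lt hpos)
      positivity
    have hdiv : (t + ω + 1) / (((Real.log (t + ω))^2 + π^2) * (t + ω) ^ ((3:ℝ)/2))
        ≤ 2 * (t + ω) / (π^2 * (t + ω)) := by
      apply div_le_div₀ (by positivity) hA (by positivity) hB
    have h2 : 2 * (t + ω) / (π^2 * (t + ω)) ≤ 1 := by
      rw [div_le_one (by positivity)]
      nlinarith
    have hnn : (0:ℝ) ≤ (t + ω + 1) / (((Real.log (t + ω))^2 + π^2) * (t + ω) ^ ((3:ℝ)/2)) := by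
      have := Real.rpow_nonneg (le_of_lt hpos) ((3:ℝ)/2)
      positivity
    rw [norm_mul, Real.norm_eq_abs, Real.norm_eq_abs, abs_of_nonneg hnn,
      abs_of_nonneg (Real.exp_nonneg _)]
    nth_rewrite 2 [← one_mul (Real.exp (-ω))]
    exact mul_le_mul_of_nonneg_right (le_trans hdiv h2) (Real.exp_nonneg _)

lemma hths_lb (φ : ℝ) (ht : 2 ≤ φ^2/2) :
    Real.exp (-1) / (((Real.log (φ^2/2+1))^2 + π^2) * (φ^2/2+1) ^ ((1:ℝ)/2))
      ≤ hthsPhiKernel φ := by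
  set t := φ^2/2 with htdef
  set D := (Real.log (t+1))^2 + π^2 with hDdef
  have hD : (0:ℝ) < D := by positivity
  set c := Real.exp (-1) / (D * (t+1) ^ ((1:ℝ)/2)) with hcdef
  set f := fun ω : ℝ =>
      ((t + ω + 1) / (((Real.log (t + ω))^2 + π^2) * (t + ω) ^ ((3:ℝ)/2)))
      * Real.exp (-ω) with hfdef
  have hfi : IntegrableOn f (Set.Ioi (0:ℝ)) := hths_integrable φ ht
  have step1 : ∫ ω in Set.Ioc (0:ℝ) 1, f ω ≤ hthsPhiKernel φ := by
    apply setIntegral_mono_set hfi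
    · filter_upwards [ae_restrict_mem measurableSet_Ioi] with ω hω
      have hω' : (0:ℝ) < ω := hω
      have hpos : (0:ℝ) ≤ t + ω := by positivity
      have := Real.rpow_nonneg hpos ((3:ℝ)/2)
      positivity
    · exact HasSubset.Subset.eventuallyLE Set.Ioc_subset_Ioi_self
  have step2 : c ≤ ∫ ω in Set.Ioc (0:ℝ) 1, f ω := by
    have : ∫ ω in Set.Ioc (0:ℝ) 1, (c:ℝ) = c := by
      simp [Real.volume_Ioc]
    rw [← this]
    apply setIntegral_mono_on
    · exact (integrableOn_const_iff).mpr (Or.inr measure_Ioc_lt_top)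
    · exact hfi.mono_set Set.Ioc_subset_Ioi_self
    · exact measurableSet_Ioc
    · intro ω hω
      obtain ⟨hω0, hω1⟩ := hω
      have hpos : (0:ℝ) < t + ω := by linarith
      have h1 : (1:ℝ) ≤ t + ω := by linarith
      have hlog0 : (0:ℝ) ≤ Real.log (t + ω) := Real.log_nonneg h1
      have hloge : Real.log (t + ω) ≤ Real.log (t + 1) :=
        Real.log_le_log (by linarith) (by linarith)
      have hBle : ((Real.log (t + ω))^2 + π^2) * (t + ω) ^ ((3:ℝ)/2)
          ≤ D * (t + ω) ^ ((3:ℝ)/2) := by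
        apply mul_le_mul_of_nonneg_right _ (Real.rpow_nonneg (le_of_lt hpos) _)
        have := pow_le_pow_left₀ hlog0 hloge 2
        rw [hDdef]; linarith
      have hstep : (t + ω) / (D * (t + ω) ^ ((3:ℝ)/2))
          ≤ (t + ω + 1) / (((Real.log (t + ω))^2 + π^2) * (t + ω) ^ ((3:ℝ)/2)) := by
        apply div_le_div₀ (by linarith) (by linarith) _ hBle
        have h2 : (0:ℝ) < (t + ω) ^ ((3:ℝ)/2) := Real.rpow_pos_of_pos hpos _
        positivity
      have hrw : (t + ω) / (D * (t + ω) ^ ((3:ℝ)/2)) = 1 / (D * (t + ω) ^ ((1:ℝ)/2)) := by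
        rw [show (3:ℝ)/2 = 1 + 1/2 by norm_num, Real.rpow_add hpos, Real.rpow_one]
        rw [show D * ((t + ω) * (t + ω) ^ ((1:ℝ)/2)) = (t + ω) * (D * (t + ω) ^ ((1:ℝ)/2)) by
          ring]
        rw [div_eq_div_iff]; · ring
        · have := Real.rpow_pos_of_pos hpos ((1:ℝ)/2); positivity
        · have := Real.rpow_pos_of_pos hpos ((1:ℝ)/2); positivity
      have hmono : 1 / (D * (t + 1) ^ ((1:ℝ)/2)) ≤ 1 / (D * (t + ω) ^ ((1:ℝ)/2)) := by
        apply one_div_le_one_div_of_le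
        · have := Real.rpow_pos_of_pos hpos ((1:ℝ)/2); positivity
        · exact mul_le_mul_of_nonneg_left
            (Real.rpow_le_rpow (le_of_lt hpos) (by linarith) (by norm_num)) (le_of_lt hD)
      have hexp : Real.exp (-1) ≤ Real.exp (-ω) := Real.exp_le_exp.mpr (by linarith)
      calc c = (1 / (D * (t+1) ^ ((1:ℝ)/2))) * Real.exp (-1) := by
              rw [hcdef]; ring
        _ ≤ ((t + ω + 1) / (((Real.log (t + ω))^2 + π^2) * (t + ω) ^ ((3:ℝ)/2)))
              * Real.exp (-ω) := by
              refine mul_le_mul ?_ hexp (Real.exp_nonneg _) ?_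
              · calc 1 / (D * (t+1) ^ ((1:ℝ)/2)) ≤ 1 / (D * (t + ω) ^ ((1:ℝ)/2)) := hmono
                  _ = (t + ω) / (D * (t + ω) ^ ((3:ℝ)/2)) := hrw.symm
                  _ ≤ _ := hstep
              · have h2 : (0:ℝ) < (t + ω) ^ ((3:ℝ)/2) := Real.rpow_pos_of_pos hpos _
                positivity
        _ = f ω := rfl
  exact le_trans step2 step1

/-- The HTHS prior marginal of φ has heavier tails than the Horseshoe prior marginal. -/
theorem hths_heavier_tails_than_hs :
    Filter.Tendsto (fun φ : ℝ => hsPhiKernel φ / hthsPhiKernel φ)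
      (Filter.cocompact ℝ) (nhds 0) := by
  -- the limit of the bounding function
  have h1 : Tendsto (fun u : ℝ => (Real.log u)^2 / u ^ ((1:ℝ)/2)) atTop (nhds 0) := by
    have h := (isLittleO_log_rpow_rpow_atTop (2:ℝ)
      (show (0:ℝ) < 1/2 by norm_num)).tendsto_div_nhds_zero
    refine h.congr fun u => ?_
    rw [show (2:ℝ) = ((2:ℕ):ℝ) by norm_num, Real.rpow_natCast]
  have h2 : Tendsto (fun u : ℝ => π^2 / u ^ ((1:ℝ)/2)) atTop (nhds 0) :=
    Tendsto.div_atTop tendsto_const_nhds (tendsto_rpow_atTop (by norm_num))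
  have hsum : Tendsto (fun u : ℝ => ((Real.log u)^2 + π^2) / u ^ ((1:ℝ)/2)) atTop (nhds 0) := by
    have h3 := h1.add h2
    rw [add_zero] at h3
    exact h3.congr fun u => (add_div _ _ _).symm
  have hBtend : Tendsto
      (fun u : ℝ => 2 * Real.exp 1 * (((Real.log u)^2 + π^2) / u ^ ((1:ℝ)/2)))
      atTop (nhds 0) := by
    have := hsum.const_mul (2 * Real.exp 1)
    simpa using this
  -- φ^2/2 → ∞ along cocompact
  have hsq : Tendsto (fun φ : ℝ => φ^2) (Filter.cocompact ℝ) atTop := by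
    have hp : Tendsto (fun x : ℝ => x^2) atTop atTop := tendsto_pow_atTop two_ne_zero
    have h := hp.comp (tendsto_norm_cocompact_atTop (E := ℝ))
    exact h.congr fun φ => by
      simp [Function.comp, Real.norm_eq_abs, sq_abs]
  have hhalf : Tendsto (fun φ : ℝ => φ^2/2) (Filter.cocompact ℝ) atTop :=
    hsq.atTop_div_const two_pos
  have hcomp : Tendsto (fun φ : ℝ => φ^2/2 + 1) (Filter.cocompact ℝ) atTop :=
    tendsto_atTop_add_const_right _ 1 hhalf
  -- squeeze
  apply squeeze_zero' (g := fun φ : ℝ =>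
    2 * Real.exp 1 * (((Real.log (φ^2/2+1))^2 + π^2) / (φ^2/2+1) ^ ((1:ℝ)/2)))
  · exact Filter.Eventually.of_forall fun φ => div_nonneg (hs_nonneg φ) (hths_nonneg φ)
  · filter_upwards [hhalf.eventually (eventually_ge_atTop 2)] with φ ht
    set t := φ^2/2 with htdef
    set D := (Real.log (t+1))^2 + π^2 with hDdef
    have hD : (0:ℝ) < D := by positivity
    have ht0 : (0:ℝ) < t := lt_of_lt_of_le two_pos ht
    set s := (t+1) ^ ((1:ℝ)/2) with hsdef
    have hs0 : (0:ℝ) < s := Real.rpow_pos_of_pos (by linarith) _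
    have hs2 : s * s = t + 1 := by
      rw [hsdef, ← Real.rpow_add (by linarith)]
      norm_num
    have hlb := hths_lb φ ht
    have hub := hs_le φ ht
    have hlbpos : (0:ℝ) < Real.exp (-1) / (D * s) := by positivity
    have step1 : hsPhiKernel φ / hthsPhiKernel φ ≤ (1/t) / (Real.exp (-1) / (D * s)) := by
      apply div_le_div₀ (by positivity) hub hlbpos hlb
    have step2 : (1/t) / (Real.exp (-1) / (D * s)) = Real.exp 1 * (D * s) / t := by
      rw [Real.exp_neg]
      field_simp
    have step3 : Real.exp 1 * (D * s) / t ≤ 2 * Real.exp 1 * (D / s) := by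
      have hds : D / s = D * s / (t + 1) := by
        rw [← hs2]; field_simp
      rw [div_le_iff₀ ht0, hds,
        show 2 * Real.exp 1 * (D * s / (t + 1)) * t = 2 * Real.exp 1 * (D * s) * t / (t+1) by
          ring, le_div_iff₀ (by linarith : (0:ℝ) < t + 1)]
      nlinarith [mul_pos hD hs0, Real.exp_pos (1:ℝ), mul_pos (Real.exp_pos (1:ℝ)) (mul_pos hD hs0)]
    calc hsPhiKernel φ / hthsPhiKernel φ ≤ (1/t) / (Real.exp (-1) / (D * s)) := step1
      _ = Real.exp 1 * (D * s) / t := step2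
      _ ≤ 2 * Real.exp 1 * (D / s) := step3
      _ = 2 * Real.exp 1 * (((Real.log (t+1))^2 + π^2) / (t+1) ^ ((1:ℝ)/2)) := rfl
  · exact hBtend.comp hcomp
end

section
/- The HTHS τ-density ratio to the Beta(1/2,1/2) density diverges at both endpoints: with g(τ) = 1/(τ(1−τ)([log(τ/(1−τ))]² + π²)) and b(τ) = 1/(π√(τ(1−τ))), the ratio g(τ)/b(τ) → ∞ as τ → 0⁺ and as τ → 1⁻. -/
open Real MeasureTheory Filter

/-- The HTHS marginal density of the shrinkage profile τ on (0,1). -/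
noncomputable def gHTHS (τ : ℝ) : ℝ :=
  1 / (τ * (1 - τ) * ((Real.log (τ / (1 - τ)))^2 + π^2))

/-- The Beta(1/2,1/2) (Horseshoe) density of τ on (0,1). -/
noncomputable def bHS (τ : ℝ) : ℝ := 1 / (π * Real.sqrt (τ * (1 - τ)))

lemma ratio_eq {τ : ℝ} (h0 : 0 < τ) (h1 : τ < 1) :
    gHTHS τ / bHS τ
      = π / (Real.sqrt (τ * (1 - τ)) * ((Real.log (τ / (1 - τ)))^2 + π^2)) := by
  have hA : 0 < τ * (1 - τ) := mul_pos h0 (by linarith)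
  have hs : 0 < Real.sqrt (τ * (1 - τ)) := Real.sqrt_pos.mpr hA
  have hsq : Real.sqrt (τ * (1 - τ)) * Real.sqrt (τ * (1 - τ)) = τ * (1 - τ) :=
    Real.mul_self_sqrt hA.le
  have hC : 0 < (Real.log (τ / (1 - τ)))^2 + π^2 := by positivity
  unfold gHTHS bHS
  rw [div_div_div_eq, one_mul, mul_one]
  rw [div_eq_div_iff (by positivity) (by positivity)]
  linear_combination (π * ((Real.log (τ / (1 - τ)))^2 + π^2)) * hsq

lemma f_tendsto :
    Tendsto (fun τ : ℝ => Real.sqrt (τ * (1 - τ)) * ((Real.log (τ / (1 - τ)))^2 + π^2))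
      (nhdsWithin 0 (Set.Ioi 0)) (nhdsWithin 0 (Set.Ioi 0)) := by
  rw [tendsto_nhdsWithin_iff]
  constructor
  · apply squeeze_zero' (g := fun τ : ℝ => (Real.log τ * τ ^ (1/4 : ℝ))^2 * 4 + Real.sqrt τ * π^2)
    · filter_upwards [Ioo_mem_nhdsGT_of_mem (Set.left_mem_Ico.mpr one_half_pos)] with τ hτ
      have : 0 < τ * (1 - τ) := mul_pos hτ.1 (by linarith [hτ.2])
      positivity
    · filter_upwards [Ioo_mem_nhdsGT_of_mem (Set.left_mem_Ico.mpr one_half_pos)] with τ hτ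
      obtain ⟨h0, h2⟩ := hτ
      have h1 : τ * (1 - τ) ≤ τ := by nlinarith
      have hsle : Real.sqrt (τ * (1 - τ)) ≤ Real.sqrt τ := Real.sqrt_le_sqrt h1
      have hC : (0:ℝ) ≤ (Real.log (τ / (1 - τ)))^2 + π^2 := by positivity
      have key : (Real.log (τ / (1 - τ)))^2 ≤ 4 * (Real.log τ)^2 := by
        rw [Real.log_div h0.ne' (by linarith)]
        have hl1 : Real.log τ ≤ -Real.log 2 := by
          rw [← Real.log_inv]
          exact Real.log_le_log h0 (by rw [show (2:ℝ)⁻¹ = 1/2 by norm_num]; linarith)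
        have hl2 : -Real.log 2 < Real.log (1 - τ) := by
          rw [← Real.log_inv]
          apply Real.log_lt_log (by norm_num)
          norm_num; linarith
        have hl3 : Real.log (1 - τ) ≤ 0 := Real.log_nonpos (by linarith) (by linarith)
        nlinarith [Real.log_pos (by norm_num : (1:ℝ) < 2)]
      have hsqrt : Real.sqrt τ = (τ ^ (1/4 : ℝ))^2 := by
        rw [Real.sqrt_eq_rpow, ← Real.rpow_natCast (τ ^ (1/4:ℝ)) 2, ← Real.rpow_mul h0.le]
        norm_num
      calc Real.sqrt (τ * (1 - τ)) * ((Real.log (τ / (1 - τ)))^2 + π^2)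
          ≤ Real.sqrt τ * ((Real.log (τ / (1 - τ)))^2 + π^2) := by
            apply mul_le_mul_of_nonneg_right hsle hC
        _ ≤ Real.sqrt τ * (4 * (Real.log τ)^2 + π^2) := by
            apply mul_le_mul_of_nonneg_left _ (Real.sqrt_nonneg τ)
            linarith
        _ = (Real.log τ * τ ^ (1/4 : ℝ))^2 * 4 + Real.sqrt τ * π^2 := by
            rw [hsqrt]; ring
    · have h1 : Tendsto (fun τ : ℝ => (Real.log τ * τ ^ (1/4 : ℝ))^2 * 4)
          (nhdsWithin 0 (Set.Ioi 0)) (nhds 0) := by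
        have := ((tendsto_log_mul_rpow_nhdsGT_zero (by norm_num : (0:ℝ) < 1/4)).pow 2).mul_const 4
        simpa using this
      have h2 : Tendsto (fun τ : ℝ => Real.sqrt τ * π^2)
          (nhdsWithin 0 (Set.Ioi 0)) (nhds 0) := by
        have : Tendsto (fun τ : ℝ => Real.sqrt τ) (nhds 0) (nhds 0) := by
          simpa using (Real.continuous_sqrt.tendsto 0)
        simpa using (this.mono_left nhdsWithin_le_nhds).mul_const (π^2)
      simpa using h1.add h2
  · filter_upwards [Ioo_mem_nhdsGT_of_mem (Set.left_mem_Ico.mpr one_pos)] with τ hτ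
    have hA : 0 < τ * (1 - τ) := mul_pos hτ.1 (by linarith [hτ.2])
    have : 0 < Real.sqrt (τ * (1 - τ)) := Real.sqrt_pos.mpr hA
    have hC : 0 < (Real.log (τ / (1 - τ)))^2 + π^2 := by positivity
    exact mul_pos this hC

lemma tendsto_zero_side :
    Tendsto (fun τ => gHTHS τ / bHS τ) (nhdsWithin 0 (Set.Ioi (0:ℝ))) atTop := by
  have h := (f_tendsto.inv_tendsto_nhdsGT_zero).const_mul_atTop Real.pi_pos
  refine h.congr' ?_
  filter_upwards [Ioo_mem_nhdsGT_of_mem (Set.left_mem_Ico.mpr one_pos)] with τ hτ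
  rw [ratio_eq hτ.1 hτ.2, div_eq_mul_inv]
  rfl

lemma gsymm (τ : ℝ) : gHTHS (1 - τ) = gHTHS τ := by
  unfold gHTHS
  rw [show (1:ℝ) - (1 - τ) = τ by ring, show (1 - τ) / τ = (τ / (1 - τ))⁻¹ by rw [inv_div],
    Real.log_inv, neg_sq]
  ring_nf

lemma bsymm (τ : ℝ) : bHS (1 - τ) = bHS τ := by
  unfold bHS
  rw [show (1:ℝ) - (1 - τ) = τ by ring, mul_comm (1 - τ) τ]

/-- The ratio of the HTHS τ-density to the Beta(1/2,1/2) density diverges at both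
endpoints of (0,1). -/
theorem hths_tau_ratio_diverges :
    Filter.Tendsto (fun τ => gHTHS τ / bHS τ) (nhdsWithin 0 (Set.Ioi (0:ℝ))) Filter.atTop ∧
    Filter.Tendsto (fun τ => gHTHS τ / bHS τ) (nhdsWithin 1 (Set.Iio (1:ℝ))) Filter.atTop := by
  refine ⟨tendsto_zero_side, ?_⟩
  have hmap : Tendsto (fun τ : ℝ => 1 - τ) (nhdsWithin 1 (Set.Iio (1:ℝ)))
      (nhdsWithin 0 (Set.Ioi (0:ℝ))) := by
    apply tendsto_nhdsWithin_of_tendsto_nhds_of_eventually_within _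
    · have : Continuous (fun τ : ℝ => 1 - τ) := by continuity
      simpa using (this.tendsto 1).mono_left nhdsWithin_le_nhds
    · filter_upwards [self_mem_nhdsWithin] with τ hτ
      simp only [Set.mem_Iio] at hτ
      simp [Set.mem_Ioi]; linarith
  have := tendsto_zero_side.comp hmap
  refine this.congr fun τ => ?_
  simp only [Function.comp_apply, gsymm, bsymm]
end

section
/- For a ∈ (0, 1/2) and φ ≠ 0, ∫₀^∞ (1/√(2π t)) e^{−φ²/(2t)} (a/2)(t^{a−1} 1_{t<1} + t^{−a−1} 1_{t≥1}) dt = (a 2^{a−1}/(√π |φ|^{1+2a})) Γ_L(1/2 + a, φ²/2) + (a 2^{−a−1}/(√π |φ|^{1−2a})) Γ_U(1/2 − a, φ²/2), where Γ_L and Γ_U are the lower and upper incomplete gamma functions. -/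
open Real MeasureTheory

/-- Lower incomplete gamma function Γ_L(s,x) = ∫₀ˣ u^{s-1} e^{-u} du. -/
noncomputable def lowerGamma (s x : ℝ) : ℝ :=
  ∫ u in Set.Ioo (0:ℝ) x, u ^ (s - 1) * Real.exp (-u)

/-- Upper incomplete gamma function Γ_U(s,x) = ∫ₓ^∞ u^{s-1} e^{-u} du. -/
noncomputable def upperGamma (s x : ℝ) : ℝ :=
  ∫ u in Set.Ioi x, u ^ (s - 1) * Real.exp (-u)

lemma aux1 (c u s : ℝ) (hc : 0 < c) (hu : 0 < u) :
    c * u ^ (-2:ℝ) * (1 / Real.sqrt (2 * π * (c * u⁻¹)) * (c * u⁻¹) ^ s)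
      = c ^ (s + 1/2) / Real.sqrt (2*π) * u ^ (-s - 3/2) := by
  have ht : 0 < c * u⁻¹ := by positivity
  have hpi : (0:ℝ) < 2 * π := by positivity
  have hs2 : Real.sqrt (2*π) ≠ 0 := by positivity
  rw [Real.sqrt_mul hpi.le, Real.sqrt_eq_rpow (c*u⁻¹)]
  have key : u ^ (-2:ℝ) * ((c * u⁻¹) ^ s / (c * u⁻¹) ^ ((1:ℝ)/2))
      = c ^ (s - 1/2) * u ^ (-s - 3/2) := by
    rw [← Real.rpow_sub ht, Real.mul_rpow hc.le (inv_nonneg.mpr hu.le),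
      Real.inv_rpow hu.le, ← Real.rpow_neg hu.le,
      show (-s - 3/2 : ℝ) = -2 + -(s - 1/2) by ring, Real.rpow_add hu]
    ring
  have key2 : c * c ^ (s - 1/2) = c ^ (s + 1/2) := by
    rw [show s + 1/2 = 1 + (s - 1/2) by ring, Real.rpow_add hc, Real.rpow_one]
  have hx : (0:ℝ) < (c * u⁻¹) ^ ((1:ℝ)/2) := Real.rpow_pos_of_pos ht _
  calc c * u ^ (-2:ℝ) * (1 / (Real.sqrt (2*π) * (c * u⁻¹) ^ ((1:ℝ)/2)) * (c * u⁻¹) ^ s)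
      = c * (u ^ (-2:ℝ) * ((c * u⁻¹) ^ s / (c * u⁻¹) ^ ((1:ℝ)/2))) / Real.sqrt (2*π) := by
        field_simp
    _ = c ^ (s + 1/2) / Real.sqrt (2*π) * u ^ (-s - 3/2) := by
        rw [key, ← mul_assoc, key2]; ring

lemma aux2 (a b e : ℝ) (hb : 0 < b) :
    a / 2 * (b^2/2) ^ e / Real.sqrt (2*π) = a * 2 ^ (-e - 3/2) / (Real.sqrt π * b ^ (-2*e)) := by
  have hb2 : (0:ℝ) < b^2 := by positivity
  have h1 : (b^2/2 : ℝ) ^ e = b ^ (2*e) * 2 ^ (-e) := by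
    rw [Real.div_rpow hb2.le (by norm_num), ← Real.rpow_natCast b 2,
      ← Real.rpow_mul hb.le, Real.rpow_neg (by norm_num : (0:ℝ) ≤ 2)]
    push_cast
    rw [mul_comm (2:ℝ) e, div_eq_mul_inv, mul_comm e 2]
  have h2 : Real.sqrt (2*π) = 2 ^ ((1:ℝ)/2) * Real.sqrt π := by
    rw [Real.sqrt_mul (by norm_num : (0:ℝ) ≤ 2), Real.sqrt_eq_rpow]
  have h3 : b ^ (2*e) * b ^ (-2*e) = 1 := by
    rw [← Real.rpow_add hb]; norm_num
  have h4 : (2:ℝ) ^ (-e - 3/2) * (2 ^ ((1:ℝ)/2) * 2) = 2 ^ (-e) := by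
    rw [← mul_assoc, ← Real.rpow_add (by norm_num : (0:ℝ) < 2),
      show -e - 3/2 + 1/2 = -e - 1 by ring,
      ← Real.rpow_add_one (by norm_num : (2:ℝ) ≠ 0) (-e - 1),
      show -e - 1 + 1 = -e by ring]
  have hsp : (0:ℝ) < Real.sqrt π := Real.sqrt_pos.mpr Real.pi_pos
  have hbe : (0:ℝ) < b ^ (-2*e) := Real.rpow_pos_of_pos hb _
  have h2half : (0:ℝ) < (2:ℝ) ^ ((1:ℝ)/2) := Real.rpow_pos_of_pos (by norm_num) _
  rw [h1, h2, div_eq_div_iff (by positivity) (by positivity)]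
  linear_combination (a/2 * (2:ℝ)^(-e) * Real.sqrt π) * h3 - (a/2 * Real.sqrt π) * h4

/-- Normal scale mixture with mixing density (a/2)(t^{a-1}1_{t<1} + t^{-a-1}1_{t≥1}),
expressed via incomplete gamma functions. -/
theorem scale_mixture_incomplete_gamma (a φ : ℝ) (ha : a ∈ Set.Ioo (0:ℝ) (1/2))
    (hφ : φ ≠ 0) :
    ∫ t in Set.Ioi (0:ℝ),
        (1 / Real.sqrt (2 * π * t)) * Real.exp (-(φ^2) / (2 * t)) *
          ((a / 2) * (if t < 1 then t ^ (a - 1) else t ^ (-a - 1)))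
      = (a * 2 ^ (a - 1) / (Real.sqrt π * |φ| ^ (1 + 2*a))) * lowerGamma (1/2 + a) (φ^2 / 2)
        + (a * 2 ^ (-a - 1) / (Real.sqrt π * |φ| ^ (1 - 2*a))) * upperGamma (1/2 - a) (φ^2 / 2) := by
  obtain ⟨ha0, ha2⟩ := ha
  have hb : 0 < |φ| := abs_pos.mpr hφ
  set c : ℝ := φ^2/2 with hcdef
  have hc : 0 < c := by positivity
  set F : ℝ → ℝ := fun t => (1 / Real.sqrt (2 * π * t)) * Real.exp (-(φ^2) / (2 * t)) *
      ((a / 2) * (if t < 1 then t ^ (a - 1) else t ^ (-a - 1))) with hF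
  set Ap : ℝ := a / 2 * c ^ (a - 1/2) / Real.sqrt (2*π) with hAp
  set Am : ℝ := a / 2 * c ^ (-a - 1/2) / Real.sqrt (2*π) with hAm
  set G : ℝ → ℝ := fun u => if c < u then Ap * (u ^ ((1/2 - a) - 1) * Real.exp (-u))
      else Am * (u ^ ((1/2 + a) - 1) * Real.exp (-u)) with hG
  have hint : ∀ s : ℝ, 0 < s →
      IntegrableOn (fun u : ℝ => u ^ (s-1) * Real.exp (-u)) (Set.Ioi (0:ℝ)) := by
    intro s hs
    exact (Real.GammaIntegral_convergent hs).congr_fun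
      (fun u _ => mul_comm _ _) measurableSet_Ioi
  -- pointwise identity
  have hpt : ∀ u ∈ Set.Ioi (0:ℝ),
      c * ((|(-1:ℝ)| * u ^ ((-1:ℝ) - 1)) • F (c * u ^ (-1:ℝ))) = G u := by
    intro u hu
    have hu0 : 0 < u := hu
    have ht : 0 < c * u⁻¹ := by positivity
    have hexp : -(φ^2) / (2 * (c * u⁻¹)) = -u := by
      rw [hcdef]; field_simp
    have hiff : (c * u⁻¹ < 1) ↔ c < u := by
      rw [← div_eq_mul_inv, div_lt_one hu0]
    simp only [hF, hG, smul_eq_mul, Real.rpow_neg_one, abs_neg, abs_one, one_mul, hexp,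
      hiff, show ((-1:ℝ) - 1) = (-2:ℝ) by norm_num]
    by_cases hcu : c < u
    · simp only [if_pos hcu]
      have h1 := aux1 c u (a - 1) hc hu0
      calc c * (u ^ (-2:ℝ) * (1 / Real.sqrt (2 * π * (c * u⁻¹)) * Real.exp (-u) *
              (a / 2 * (c * u⁻¹) ^ (a - 1))))
          = (a/2) * Real.exp (-u) *
            (c * u ^ (-2:ℝ) * (1 / Real.sqrt (2 * π * (c * u⁻¹)) * (c * u⁻¹) ^ (a - 1))) := by ring
        _ = (a/2) * Real.exp (-u) * (c ^ ((a-1) + 1/2) / Real.sqrt (2*π) * u ^ (-(a-1) - 3/2)) := by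
            rw [h1]
        _ = Ap * (u ^ ((1/2 - a) - 1) * Real.exp (-u)) := by
            rw [hAp, show (a-1) + 1/2 = a - 1/2 by ring, show -(a-1) - 3/2 = (1/2 - a) - 1 by ring]
            ring
    · simp only [if_neg hcu]
      have h1 := aux1 c u (-a - 1) hc hu0
      calc c * (u ^ (-2:ℝ) * (1 / Real.sqrt (2 * π * (c * u⁻¹)) * Real.exp (-u) *
              (a / 2 * (c * u⁻¹) ^ (-a - 1))))
          = (a/2) * Real.exp (-u) *
            (c * u ^ (-2:ℝ) * (1 / Real.sqrt (2 * π * (c * u⁻¹)) * (c * u⁻¹) ^ (-a - 1))) := by ring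
        _ = (a/2) * Real.exp (-u) * (c ^ ((-a-1) + 1/2) / Real.sqrt (2*π) * u ^ (-(-a-1) - 3/2)) := by
            rw [h1]
        _ = Am * (u ^ ((1/2 + a) - 1) * Real.exp (-u)) := by
            rw [hAm, show (-a-1) + 1/2 = -a - 1/2 by ring, show -(-a-1) - 3/2 = (1/2 + a) - 1 by ring]
            ring
  have step1 : (∫ t in Set.Ioi (0:ℝ), F t) = c * ∫ x in Set.Ioi (0:ℝ), F (c * x) := by
    rw [integral_comp_mul_left_Ioi F 0 hc, mul_zero, smul_eq_mul, ← mul_assoc,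
      mul_inv_cancel₀ hc.ne', one_mul]
  have step2 : (∫ x in Set.Ioi (0:ℝ), F (c * x))
      = ∫ u in Set.Ioi (0:ℝ), (|(-1:ℝ)| * u ^ ((-1:ℝ) - 1)) • F (c * u ^ (-1:ℝ)) :=
    (integral_comp_rpow_Ioi (fun x => F (c*x)) (by norm_num)).symm
  have hGm : IntegrableOn G (Set.Ioc (0:ℝ) c) := by
    refine IntegrableOn.congr_fun
      (((hint (1/2 + a) (by linarith)).mono_set Set.Ioc_subset_Ioi_self).const_mul Am)
      ?_ measurableSet_Ioc
    intro u hu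
    simp only [hG, if_neg (not_lt.mpr hu.2)]
  have hGp : IntegrableOn G (Set.Ioi c) := by
    refine IntegrableOn.congr_fun
      (((hint (1/2 - a) (by linarith)).mono_set (Set.Ioi_subset_Ioi hc.le)).const_mul Ap)
      ?_ measurableSet_Ioi
    intro u hu
    simp only [hG, if_pos (Set.mem_Ioi.mp hu)]
  calc (∫ t in Set.Ioi (0:ℝ), F t)
      = c * ∫ u in Set.Ioi (0:ℝ), (|(-1:ℝ)| * u ^ ((-1:ℝ) - 1)) • F (c * u ^ (-1:ℝ)) := by
        rw [step1, step2]
    _ = ∫ u in Set.Ioi (0:ℝ), G u := by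
        rw [← integral_const_mul]
        exact setIntegral_congr_fun measurableSet_Ioi hpt
    _ = (∫ u in Set.Ioc (0:ℝ) c, G u) + ∫ u in Set.Ioi c, G u := by
        rw [← setIntegral_union (Set.Ioc_disjoint_Ioi le_rfl) measurableSet_Ioi hGm hGp,
          Set.Ioc_union_Ioi_eq_Ioi hc.le]
    _ = Am * lowerGamma (1/2 + a) c + Ap * upperGamma (1/2 - a) c := by
        congr 1
        · rw [setIntegral_congr_fun measurableSet_Ioc
            (fun u hu => by simp only [hG, if_neg (not_lt.mpr hu.2)] :
              Set.EqOn G (fun u => Am * (u ^ ((1/2 + a) - 1) * Real.exp (-u))) (Set.Ioc 0 c)),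
            integral_const_mul, lowerGamma, integral_Ioc_eq_integral_Ioo]
        · rw [setIntegral_congr_fun measurableSet_Ioi
            (fun u hu => by simp only [hG, if_pos (Set.mem_Ioi.mp hu)] :
              Set.EqOn G (fun u => Ap * (u ^ ((1/2 - a) - 1) * Real.exp (-u))) (Set.Ioi c)),
            integral_const_mul, upperGamma]
    _ = (a * 2 ^ (a - 1) / (Real.sqrt π * |φ| ^ (1 + 2*a))) * lowerGamma (1/2 + a) c
        + (a * 2 ^ (-a - 1) / (Real.sqrt π * |φ| ^ (1 - 2*a))) * upperGamma (1/2 - a) c := by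
        have e1 : Am = a * 2 ^ (a - 1) / (Real.sqrt π * |φ| ^ (1 + 2*a)) := by
          rw [hAm, hcdef, show φ^2 = |φ|^2 by rw [sq_abs], aux2 a |φ| (-a - 1/2) hb,
            show -(-a - 1/2) - 3/2 = a - 1 by ring, show -2 * (-a - 1/2) = 1 + 2*a by ring]
        have e2 : Ap = a * 2 ^ (-a - 1) / (Real.sqrt π * |φ| ^ (1 - 2*a)) := by
          rw [hAp, hcdef, show φ^2 = |φ|^2 by rw [sq_abs], aux2 a |φ| (a - 1/2) hb,
            show -(a - 1/2) - 3/2 = -a - 1 by ring, show -2 * (a - 1/2) = 1 - 2*a by ring]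
        rw [e1, e2]
end

section
/- Let m(y) = ∫ (1/√(2π)) e^{−(y−φ)²/2} h(φ) dφ where h is a probability density on ℝ satisfying h(φ) ≍ 1/(|φ|(log|φ|)²) as |φ| → ∞ (i.e., there are positive constants c, C, M such that c/(|φ|(log|φ|)²) ≤ h(φ) ≤ C/(|φ|(log|φ|)²) for |φ| > M). Then there exist positive constants c', C' and M' such that for |y| > M', c'/(|y|(log|y|)²) ≤ m(y) ≤ C'/(|y|(log|y|)²). -/
open Real MeasureTheory Filter

private lemma gauss_kernel_integral (y : ℝ) :
    ∫ φ : ℝ, (1 / Real.sqrt (2 * π)) * Real.exp (-(y - φ)^2 / 2) = 1 := by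
  have h1 := MeasureTheory.integral_sub_left_eq_self (fun x => Real.exp (-x^2/2)) (volume) y
  have h2 := integral_gaussian (1/2)
  have h3 : (fun x : ℝ => Real.exp (-x^2/2)) = fun x : ℝ => Real.exp (-(1/2)*x^2) := by
    funext x; ring_nf
  rw [MeasureTheory.integral_const_mul, h1, h3, h2]
  have hpos : (0:ℝ) < Real.sqrt (2*π) := Real.sqrt_pos.mpr (by positivity)
  have : Real.sqrt (π / (1/2)) = Real.sqrt (2*π) := by norm_num; ring_nf
  rw [this]
  field_simp

private lemma cube_le_exp (t : ℝ) (ht : 0 ≤ t) : t ^ 3 ≤ 27 * Real.exp t := by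
  have h1 : t / 3 + 1 ≤ Real.exp (t / 3) := Real.add_one_le_exp _
  have h2 : (t / 3) ^ 3 ≤ (t / 3 + 1) ^ 3 := by
    apply pow_le_pow_left₀ (by positivity) (by linarith)
  have h3 : (t / 3 + 1) ^ 3 ≤ (Real.exp (t / 3)) ^ 3 := by
    apply pow_le_pow_left₀ (by positivity) h1
  have h4 : (Real.exp (t / 3)) ^ 3 = Real.exp t := by
    rw [← Real.exp_nat_mul]; norm_num; ring_nf
  nlinarith [h2, h3, h4]

set_option maxHeartbeats 1000000 in
/-- Gaussian convolution preserves tails of order 1/(|φ| (log |φ|)²): if a probability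
density h has such two-sided tail bounds, then so does the marginal m(y) = ∫ N(y-φ) h(φ) dφ. -/
theorem gaussian_convolution_preserves_tail
    (h : ℝ → ℝ) (hmeas : Measurable h) (hnonneg : ∀ φ, 0 ≤ h φ)
    (hint : ∫ φ : ℝ, h φ = 1)
    (c C M : ℝ) (hc : 0 < c) (hC : 0 < C) (hM : 0 < M)
    (htail : ∀ φ : ℝ, M < |φ| →
      c / (|φ| * (Real.log |φ|)^2) ≤ h φ ∧ h φ ≤ C / (|φ| * (Real.log |φ|)^2)) :
    ∃ c' C' M' : ℝ, 0 < c' ∧ 0 < C' ∧ 0 < M' ∧ ∀ y : ℝ, M' < |y| →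
      c' / (|y| * (Real.log |y|)^2)
          ≤ ∫ φ : ℝ, (1 / Real.sqrt (2 * π)) * Real.exp (-(y - φ)^2 / 2) * h φ ∧
      (∫ φ : ℝ, (1 / Real.sqrt (2 * π)) * Real.exp (-(y - φ)^2 / 2) * h φ)
          ≤ C' / (|y| * (Real.log |y|)^2) := by
  have hsqrt : (0:ℝ) < Real.sqrt (2*π) := Real.sqrt_pos.mpr (by positivity)
  have hsqrt1 : (1:ℝ) ≤ Real.sqrt (2*π) := by
    rw [Real.one_le_sqrt]; nlinarith [Real.pi_gt_three]
  -- h is integrable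
  have hInt : Integrable h := by
    by_contra hni
    rw [MeasureTheory.integral_undef hni] at hint; norm_num at hint
  -- pointwise facts about the kernel
  have hker_nonneg : ∀ y φ : ℝ, 0 ≤ (1 / Real.sqrt (2*π)) * Real.exp (-(y-φ)^2/2) := by
    intro y φ; positivity
  have hker_le : ∀ y φ : ℝ, (1 / Real.sqrt (2*π)) * Real.exp (-(y-φ)^2/2) ≤ 1 / Real.sqrt (2*π) := by
    intro y φ
    have : Real.exp (-(y-φ)^2/2) ≤ 1 := by
      rw [Real.exp_le_one_iff]
      nlinarith [sq_nonneg (y - φ)]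
    exact mul_le_of_le_one_right (by positivity) this
  -- measurability and integrability of the integrand
  have hfmeas : ∀ y : ℝ, Measurable (fun φ => (1 / Real.sqrt (2*π)) * Real.exp (-(y-φ)^2/2) * h φ) := by
    intro y
    apply Measurable.mul _ hmeas
    exact (measurable_const.mul (((((measurable_const.sub measurable_id).pow_const 2).neg).div_const 2).exp))
  have hfint : ∀ y : ℝ, Integrable (fun φ => (1 / Real.sqrt (2*π)) * Real.exp (-(y-φ)^2/2) * h φ) := by
    intro y
    apply Integrable.mono' (hInt.const_mul (1 / Real.sqrt (2*π))) (hfmeas y).aestronglyMeasurable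
    filter_upwards with φ
    rw [Real.norm_eq_abs, abs_of_nonneg (mul_nonneg (by positivity) (hnonneg φ))]
    exact mul_le_mul_of_nonneg_right (hker_le y φ) (hnonneg φ)
  have hf_nonneg : ∀ y φ : ℝ, 0 ≤ (1 / Real.sqrt (2*π)) * Real.exp (-(y-φ)^2/2) * h φ := by
    intro y φ; exact mul_nonneg (hker_nonneg y φ) (hnonneg φ)
  refine ⟨c * Real.exp (-(1:ℝ)/2) / (4 * Real.sqrt (2*π)), 8*C + 27, 2*M + 10, by positivity,
    by positivity, by positivity, ?_⟩
  intro y hy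
  have hy10 : (10:ℝ) < |y| := by linarith
  have hylog : (0:ℝ) < Real.log |y| := Real.log_pos (by linarith)
  have hD : (0:ℝ) < |y| * (Real.log |y|)^2 := by positivity
  have hy0 : (0:ℝ) < |y| := by linarith
  constructor
  · -- LOWER BOUND
    set S : Set ℝ := Set.Icc (y-1) (y+1) with hS
    have hSmeas : MeasurableSet S := measurableSet_Icc
    have hbound : ∀ φ ∈ S, (1 / Real.sqrt (2*π)) * Real.exp (-(1:ℝ)/2) * (c / (8 * (|y| * (Real.log |y|)^2)))
        ≤ (1 / Real.sqrt (2*π)) * Real.exp (-(y-φ)^2/2) * h φ := by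
      intro φ hφ
      obtain ⟨h1, h2⟩ := hφ
      have hdist : |y - φ| ≤ 1 := by rw [abs_le]; constructor <;> linarith
      have hφabs : |y| - 1 ≤ |φ| := by
        have := abs_sub_abs_le_abs_sub y φ
        linarith
      have hφM : M < |φ| := by linarith
      have hφ1 : (1:ℝ) ≤ |φ| := by linarith
      have hφlog : 0 ≤ Real.log |φ| := Real.log_nonneg hφ1
      -- |φ| ≤ |y| + 1 ≤ 2|y|, log |φ| ≤ 2 log |y|
      have hφup : |φ| ≤ |y| + 1 := by
        have := abs_sub_abs_le_abs_sub φ y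
        have : |φ| - |y| ≤ |φ - y| := this
        rw [abs_sub_comm] at this
        linarith
      have hφ2y : |φ| ≤ 2 * |y| := by linarith
      have hlogφ : Real.log |φ| ≤ 2 * Real.log |y| := by
        have h1 : |φ| ≤ |y|^2 := by nlinarith
        calc Real.log |φ| ≤ Real.log (|y|^2) := Real.log_le_log (by linarith) h1
          _ = 2 * Real.log |y| := by rw [Real.log_pow]; push_cast; ring
      have hden : |φ| * (Real.log |φ|)^2 ≤ 8 * (|y| * (Real.log |y|)^2) := by
        have hsq : (Real.log |φ|)^2 ≤ 4 * (Real.log |y|)^2 := by nlinarith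
        nlinarith
      have hhφ : c / (8 * (|y| * (Real.log |y|)^2)) ≤ h φ := by
        refine le_trans ?_ (htail φ hφM).1
        have hφlogpos : 0 < Real.log |φ| := Real.log_pos (by linarith)
        exact div_le_div_of_nonneg_left (le_of_lt hc) (mul_pos (by linarith) (pow_pos hφlogpos 2)) hden
      have hkerlb : (1 / Real.sqrt (2*π)) * Real.exp (-(1:ℝ)/2) ≤ (1 / Real.sqrt (2*π)) * Real.exp (-(y-φ)^2/2) := by
        apply mul_le_mul_of_nonneg_left _ (by positivity)
        apply Real.exp_le_exp.mpr
        have : (y - φ)^2 ≤ 1 := by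
          have := sq_abs (y - φ)
          nlinarith [abs_nonneg (y - φ)]
        linarith
      calc (1 / Real.sqrt (2*π)) * Real.exp (-(1:ℝ)/2) * (c / (8 * (|y| * (Real.log |y|)^2)))
          ≤ (1 / Real.sqrt (2*π)) * Real.exp (-(y-φ)^2/2) * (c / (8 * (|y| * (Real.log |y|)^2))) := by
            apply mul_le_mul_of_nonneg_right hkerlb (by positivity)
        _ ≤ (1 / Real.sqrt (2*π)) * Real.exp (-(y-φ)^2/2) * h φ := by
            apply mul_le_mul_of_nonneg_left hhφ (hker_nonneg y φ)
    have hSvol : volume S = ENNReal.ofReal 2 := by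
      rw [hS, Real.volume_Icc]; norm_num
    have hlow := MeasureTheory.setIntegral_ge_of_const_le hSmeas
      (by rw [hSvol]; exact ENNReal.ofReal_ne_top) hbound ((hfint y).integrableOn)
    have hvol2 : volume.real S = 2 := by simp [Measure.real, hSvol]
    rw [hvol2, smul_eq_mul, mul_comm] at hlow
    have hle2 : (∫ φ in S, (1 / Real.sqrt (2*π)) * Real.exp (-(y-φ)^2/2) * h φ)
        ≤ ∫ φ : ℝ, (1 / Real.sqrt (2*π)) * Real.exp (-(y-φ)^2/2) * h φ :=
      MeasureTheory.setIntegral_le_integral (hfint y) (Filter.Eventually.of_forall (hf_nonneg y))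
    have heq : c * Real.exp (-(1:ℝ)/2) / (4 * Real.sqrt (2*π)) / (|y| * (Real.log |y|)^2)
        = (1 / Real.sqrt (2*π)) * Real.exp (-(1:ℝ)/2) * (c / (8 * (|y| * (Real.log |y|)^2))) * 2 := by
      field_simp
      ring
    rw [heq]
    exact le_trans hlow hle2
  · -- UPPER BOUND
    set A : Set ℝ := {φ : ℝ | |y - φ| ≤ |y| / 2} with hA
    have hAmeas : MeasurableSet A :=
      measurableSet_le ((measurable_const.sub measurable_id).abs) measurable_const
    have hsplit := MeasureTheory.integral_add_compl hAmeas (hfint y)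
    -- near part
    have hGint : Integrable (fun φ : ℝ => (8*C / (|y| * (Real.log |y|)^2)) *
        ((1 / Real.sqrt (2*π)) * Real.exp (-(y-φ)^2/2))) := by
      have hg : Integrable (fun x : ℝ => Real.exp (-(1/2) * x^2)) := integrable_exp_neg_mul_sq (by norm_num)
      have hg2 : Integrable (fun φ : ℝ => Real.exp (-(1/2) * (y - φ)^2)) := hg.comp_sub_left y
      have hg3 : (fun φ : ℝ => Real.exp (-(y-φ)^2/2)) = fun φ : ℝ => Real.exp (-(1/2) * (y - φ)^2) := by
        funext φ; ring_nf
      apply Integrable.const_mul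
      apply Integrable.const_mul
      rw [hg3]; exact hg2
    have hnear : (∫ φ in A, (1 / Real.sqrt (2*π)) * Real.exp (-(y-φ)^2/2) * h φ)
        ≤ 8*C / (|y| * (Real.log |y|)^2) := by
      have hmono : ∀ φ ∈ A, (1 / Real.sqrt (2*π)) * Real.exp (-(y-φ)^2/2) * h φ
          ≤ (8*C / (|y| * (Real.log |y|)^2)) * ((1 / Real.sqrt (2*π)) * Real.exp (-(y-φ)^2/2)) := by
        intro φ hφ
        have hdist : |y - φ| ≤ |y| / 2 := hφ
        have hφlb : |y| / 2 ≤ |φ| := by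
          have := abs_sub_abs_le_abs_sub y φ
          linarith
        have hφM : M < |φ| := by linarith
        have hloglb : Real.log |y| / 2 ≤ Real.log |φ| := by
          have h4 : Real.log (|y|/2) ≤ Real.log |φ| := Real.log_le_log (by linarith) hφlb
          have h5 : Real.log (|y|/2) = Real.log |y| - Real.log 2 := by
            rw [Real.log_div (by linarith) (by norm_num)]
          have h6 : Real.log 2 ≤ Real.log |y| / 2 := by
            have : Real.log 2 ≤ Real.log (Real.sqrt |y|) := by
              apply Real.log_le_log (by norm_num)
              rw [show (2:ℝ) = Real.sqrt 4 by rw [show (4:ℝ) = 2^2 by norm_num, Real.sqrt_sq]; norm_num]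
              exact Real.sqrt_le_sqrt (by linarith)
            rwa [Real.log_sqrt (by linarith)] at this
          linarith
        have hloglb0 : 0 ≤ Real.log |y| / 2 := by linarith
        have hden : (|y| * (Real.log |y|)^2) / 8 ≤ |φ| * (Real.log |φ|)^2 := by
          have hsq : (Real.log |y| / 2)^2 ≤ (Real.log |φ|)^2 := by nlinarith
          have : (|y|/2) * (Real.log |y| / 2)^2 ≤ |φ| * (Real.log |φ|)^2 := by
            apply mul_le_mul hφlb hsq (by positivity) (by linarith)
          nlinarith
        have hhφ : h φ ≤ 8*C / (|y| * (Real.log |y|)^2) := by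
          refine le_trans (htail φ hφM).2 ?_
          rw [show 8*C / (|y| * (Real.log |y|)^2) = C / ((|y| * (Real.log |y|)^2)/8) by ring]
          apply div_le_div_of_nonneg_left (le_of_lt hC) (by linarith [hD]) hden
        calc (1 / Real.sqrt (2*π)) * Real.exp (-(y-φ)^2/2) * h φ
            ≤ (1 / Real.sqrt (2*π)) * Real.exp (-(y-φ)^2/2) * (8*C / (|y| * (Real.log |y|)^2)) :=
              mul_le_mul_of_nonneg_left hhφ (hker_nonneg y φ)
          _ = (8*C / (|y| * (Real.log |y|)^2)) * ((1 / Real.sqrt (2*π)) * Real.exp (-(y-φ)^2/2)) := by ring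
      have h1 : (∫ φ in A, (1 / Real.sqrt (2*π)) * Real.exp (-(y-φ)^2/2) * h φ)
          ≤ ∫ φ in A, (8*C / (|y| * (Real.log |y|)^2)) * ((1 / Real.sqrt (2*π)) * Real.exp (-(y-φ)^2/2)) :=
        MeasureTheory.setIntegral_mono_on ((hfint y).integrableOn) (hGint.integrableOn) hAmeas hmono
      have h2 : (∫ φ in A, (8*C / (|y| * (Real.log |y|)^2)) * ((1 / Real.sqrt (2*π)) * Real.exp (-(y-φ)^2/2)))
          ≤ ∫ φ : ℝ, (8*C / (|y| * (Real.log |y|)^2)) * ((1 / Real.sqrt (2*π)) * Real.exp (-(y-φ)^2/2)) := by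
        apply MeasureTheory.setIntegral_le_integral hGint
        filter_upwards with φ
        positivity
      have h3 : (∫ φ : ℝ, (8*C / (|y| * (Real.log |y|)^2)) * ((1 / Real.sqrt (2*π)) * Real.exp (-(y-φ)^2/2)))
          = 8*C / (|y| * (Real.log |y|)^2) := by
        rw [MeasureTheory.integral_const_mul, gauss_kernel_integral y, mul_one]
      linarith
    -- far part
    have hfar : (∫ φ in Aᶜ, (1 / Real.sqrt (2*π)) * Real.exp (-(y-φ)^2/2) * h φ)
        ≤ 27 / (|y| * (Real.log |y|)^2) := by
      have hmono : ∀ φ ∈ Aᶜ, (1 / Real.sqrt (2*π)) * Real.exp (-(y-φ)^2/2) * h φ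
          ≤ Real.exp (-(y^2/8)) * h φ := by
        intro φ hφ
        have hdist : |y| / 2 < |y - φ| := by
          simp only [hA, Set.mem_compl_iff, Set.mem_setOf_eq, not_le] at hφ
          exact hφ
        have hsq : y^2 / 4 ≤ (y - φ)^2 := by
          have h1 : (|y|/2)^2 ≤ |y - φ|^2 := by
            apply pow_le_pow_left₀ (by positivity) (le_of_lt hdist)
          rw [sq_abs] at h1
          nlinarith [sq_abs y]
        have hker : Real.exp (-(y-φ)^2/2) ≤ Real.exp (-(y^2/8)) := by
          apply Real.exp_le_exp.mpr; linarith
        calc (1 / Real.sqrt (2*π)) * Real.exp (-(y-φ)^2/2) * h φ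
            ≤ 1 * Real.exp (-(y-φ)^2/2) * h φ := by
              apply mul_le_mul_of_nonneg_right _ (hnonneg φ)
              apply mul_le_mul_of_nonneg_right _ (Real.exp_nonneg _)
              rw [div_le_one hsqrt]; exact hsqrt1
          _ = Real.exp (-(y-φ)^2/2) * h φ := by ring
          _ ≤ Real.exp (-(y^2/8)) * h φ := mul_le_mul_of_nonneg_right hker (hnonneg φ)
      have h1 : (∫ φ in Aᶜ, (1 / Real.sqrt (2*π)) * Real.exp (-(y-φ)^2/2) * h φ)
          ≤ ∫ φ in Aᶜ, Real.exp (-(y^2/8)) * h φ :=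
        MeasureTheory.setIntegral_mono_on ((hfint y).integrableOn)
          ((hInt.const_mul _).integrableOn) hAmeas.compl hmono
      have h2 : (∫ φ in Aᶜ, Real.exp (-(y^2/8)) * h φ) ≤ ∫ φ : ℝ, Real.exp (-(y^2/8)) * h φ := by
        apply MeasureTheory.setIntegral_le_integral (hInt.const_mul _)
        filter_upwards with φ
        exact mul_nonneg (Real.exp_nonneg _) (hnonneg φ)
      have h3 : (∫ φ : ℝ, Real.exp (-(y^2/8)) * h φ) = Real.exp (-(y^2/8)) := by
        rw [MeasureTheory.integral_const_mul, hint, mul_one]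
      have h4 : Real.exp (-(y^2/8)) ≤ 27 / (|y| * (Real.log |y|)^2) := by
        have hexp : |y|^3 ≤ 27 * Real.exp (y^2/8) := by
          have hy8 : |y| ≤ y^2 / 8 := by nlinarith [sq_abs y]
          calc |y|^3 ≤ 27 * Real.exp |y| := cube_le_exp |y| (abs_nonneg y)
            _ ≤ 27 * Real.exp (y^2/8) := by
              apply mul_le_mul_of_nonneg_left (Real.exp_le_exp.mpr hy8) (by norm_num)
        have hD3 : |y| * (Real.log |y|)^2 ≤ |y|^3 := by
          have hlog : Real.log |y| ≤ |y| := by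
            have := Real.log_le_sub_one_of_pos hy0
            linarith
          have hsqlog : (Real.log |y|)^2 ≤ |y|^2 := by nlinarith [hylog, hlog]
          nlinarith [hsqlog, hy0]
        have step1 : Real.exp (-(y^2/8)) ≤ 27 / |y|^3 := by
          rw [le_div_iff₀ (by positivity : (0:ℝ) < |y|^3)]
          calc Real.exp (-(y^2/8)) * |y|^3
              ≤ Real.exp (-(y^2/8)) * (27 * Real.exp (y^2/8)) := by
                exact mul_le_mul_of_nonneg_left hexp (Real.exp_nonneg _)
            _ = 27 := by rw [Real.exp_neg]; field_simp
        calc Real.exp (-(y^2/8)) ≤ 27 / |y|^3 := step1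
          _ ≤ 27 / (|y| * (Real.log |y|)^2) := by
            apply div_le_div_of_nonneg_left (by norm_num) hD hD3
      linarith
    have hsum : (∫ φ : ℝ, (1 / Real.sqrt (2*π)) * Real.exp (-(y-φ)^2/2) * h φ)
        ≤ 8*C / (|y| * (Real.log |y|)^2) + 27 / (|y| * (Real.log |y|)^2) := by
      rw [← hsplit]; linarith
    calc (∫ φ : ℝ, (1 / Real.sqrt (2*π)) * Real.exp (-(y-φ)^2/2) * h φ)
        ≤ 8*C / (|y| * (Real.log |y|)^2) + 27 / (|y| * (Real.log |y|)^2) := hsum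
      _ = (8*C + 27) / (|y| * (Real.log |y|)^2) := by ring
end
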